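/- There exists a universal constant c > 0 with the following property (Gluskin). For every n ≥ 1 and every m ≥ 2n, every convex polytope P ⊆ ℝⁿ contained in the closed Euclidean unit ball 𝔹_n and having at most m vertices (i.e., P is the convex hull of at most m points of 𝔹_n) satisfies vol_n(P) ≤ ( c · √(log(m/n)) / n )^n. -/

import Mathlib

open MeasureTheory Metric
open Real Finset ENNReal


lemma pow_le_exp_mul_factorial : ∀ k : ℕ, (k:ℝ)^k ≤ Real.exp 1 ^ k * k.factorial
  | 0 => by norm_num
  | (k+1) => by
    have IH := pow_le_exp_mul_factorial k
    push_cast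
    have h1 : ((k:ℝ)+1)^k ≤ Real.exp 1 * (k:ℝ)^k := by
      rcases Nat.eq_zero_or_pos k with hk | hk
      · subst hk; simp [Real.one_le_exp_iff]
      · have hkpos : (0:ℝ) < k := by exact_mod_cast hk
        have h0 : ((k:ℝ)+1)^k = (k:ℝ)^k * (1 + 1/k)^k := by
          rw [← mul_pow]; field_simp
        rw [h0]
        have h2 : (1 + 1/(k:ℝ))^k ≤ Real.exp 1 := by
          have h3 : (1 + 1/(k:ℝ)) ≤ Real.exp (1/k) := by
            have := Real.add_one_le_exp (1/(k:ℝ)); linarith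
          calc (1 + 1/(k:ℝ))^k ≤ Real.exp (1/k) ^ k := by
                apply pow_le_pow_left₀ (by positivity) h3
            _ = Real.exp 1 := by
                rw [← Real.exp_nat_mul]; congr 1; field_simp
        nlinarith [pow_nonneg (le_of_lt hkpos) k, Real.exp_pos 1]
    calc ((k:ℝ)+1)^(k+1) = ((k:ℝ)+1) * ((k:ℝ)+1)^k := by ring
      _ ≤ ((k:ℝ)+1) * (Real.exp 1 * (k:ℝ)^k) := by nlinarith [Nat.cast_nonneg (α := ℝ) k]
      _ ≤ ((k:ℝ)+1) * (Real.exp 1 * (Real.exp 1 ^ k * k.factorial)) := by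
          have := Real.exp_pos 1
          apply mul_le_mul_of_nonneg_left _ (by positivity)
          nlinarith
      _ = Real.exp 1 ^ (k+1) * ((k+1) * k.factorial) := by ring
      _ = Real.exp 1 ^ (k+1) * (k+1).factorial := by
          rw [Nat.factorial_succ]; push_cast; ring


lemma half_fact_bound : ∀ n : ℕ, (n:ℝ)^n ≤ 50^n * ((n/2).factorial : ℝ)^2
  | 0 => by norm_num
  | 1 => by norm_num
  | (n+2) => by
    have IH := half_fact_bound n
    have hp : n + 1 ≤ 2 * (n/2 + 1) := by omega
    have hpn : ((n+2)/2) = n/2 + 1 := by omega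
    rw [hpn]
    rcases Nat.eq_zero_or_pos n with h0 | hn
    · subst h0; norm_num [Nat.factorial]
    have hnpos : (0:ℝ) < n := by exact_mod_cast hn
    have he : Real.exp 1 < 2.7182818286 := Real.exp_one_lt_d9
    have hepos := Real.exp_pos 1
    -- (n+2)^n ≤ e^2 * n^n
    have h1 : ((n:ℝ)+2)^n ≤ Real.exp 1 ^ 2 * (n:ℝ)^n := by
      have h0 : ((n:ℝ)+2)^n = (n:ℝ)^n * (1 + 2/n)^n := by
        rw [← mul_pow]; field_simp
      rw [h0]
      have h2 : (1 + 2/(n:ℝ))^n ≤ Real.exp 1 ^ 2 := by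
        have h3 : (1 + 2/(n:ℝ)) ≤ Real.exp (2/n) := by
          have := Real.add_one_le_exp (2/(n:ℝ)); linarith
        calc (1 + 2/(n:ℝ))^n ≤ Real.exp (2/n) ^ n := by
              apply pow_le_pow_left₀ (by positivity) h3
          _ = Real.exp 2 := by rw [← Real.exp_nat_mul]; congr 1; field_simp
          _ = Real.exp 1 ^ 2 := by rw [← Real.exp_nat_mul]; norm_num
      nlinarith [pow_nonneg (le_of_lt hnpos) n]
    -- (n+2)^2 * e^2 ≤ 2500 * (p+1)^2
    have hp' : ((n:ℝ)+1) ≤ 2 * ((n/2 : ℕ) + 1 : ℝ) := by exact_mod_cast hp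
    have he2 : Real.exp 1 ^ 2 ≤ 7.39 := by nlinarith
    have h5 : (n:ℝ)+2 ≤ 3*(((n/2:ℕ):ℝ)+1) := by
      have h6 : (0:ℝ) ≤ ((n/2:ℕ):ℝ) := Nat.cast_nonneg _
      linarith
    have h4 : ((n:ℝ)+2)^2 * Real.exp 1 ^ 2 ≤ 2500 * (((n/2:ℕ):ℝ) + 1)^2 := by
      nlinarith [Nat.cast_nonneg (α := ℝ) (n/2), sq_nonneg ((n:ℝ)+2), he2]
    have hfact : (((n/2 + 1).factorial : ℝ)) = (((n/2:ℕ):ℝ)+1) * ((n/2).factorial : ℝ) := by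
      rw [Nat.factorial_succ]; push_cast; ring
    have hf0 : (0:ℝ) < ((n/2).factorial : ℝ) := by exact_mod_cast (n/2).factorial_pos
    push_cast
    calc ((n:ℝ)+2)^(n+2) = ((n:ℝ)+2)^2 * ((n:ℝ)+2)^n := by ring
      _ ≤ ((n:ℝ)+2)^2 * (Real.exp 1 ^ 2 * (n:ℝ)^n) := by
          apply mul_le_mul_of_nonneg_left h1 (by positivity)
      _ ≤ ((n:ℝ)+2)^2 * (Real.exp 1 ^ 2 * (50^n * ((n/2).factorial : ℝ)^2)) := by
          apply mul_le_mul_of_nonneg_left _ (by positivity)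
          apply mul_le_mul_of_nonneg_left IH (by positivity)
      _ = (((n:ℝ)+2)^2 * Real.exp 1 ^ 2) * (50^n * ((n/2).factorial : ℝ)^2) := by ring
      _ ≤ (2500 * (((n/2:ℕ):ℝ) + 1)^2) * (50^n * ((n/2).factorial : ℝ)^2) := by
          apply mul_le_mul_of_nonneg_right h4 (by positivity)
      _ = 50^(n+2) * ((((n/2:ℕ):ℝ)+1) * ((n/2).factorial : ℝ))^2 := by ring
      _ = 50^(n+2) * ((n/2+1).factorial : ℝ)^2 := by rw [hfact]

lemma half_fact_le_gamma : ∀ n : ℕ, ((n/2).factorial : ℝ) ≤ 2 * Real.Gamma ((n:ℝ)/2 + 1)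
  | 0 => by norm_num [Real.Gamma_one]
  | 1 => by
    norm_num
    rw [show (3:ℝ)/2 = 1/2 + 1 by norm_num, Real.Gamma_add_one (by norm_num),
      Real.Gamma_one_half_eq]
    nlinarith [Real.sq_sqrt (le_of_lt Real.pi_pos), Real.sqrt_nonneg π, Real.pi_gt_three]
  | (n+2) => by
    have IH := half_fact_le_gamma n
    have hpn : ((n+2)/2) = n/2 + 1 := by omega
    rw [hpn]
    have harg : ((n:ℝ)+2)/2 + 1 = ((n:ℝ)/2 + 1) + 1 := by ring
    push_cast
    rw [harg, Real.Gamma_add_one (by positivity)]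
    have hfact : (((n/2 + 1).factorial : ℝ)) = (((n/2:ℕ):ℝ)+1) * ((n/2).factorial : ℝ) := by
      rw [Nat.factorial_succ]; push_cast; ring
    have hle : (((n/2:ℕ):ℝ)+1) ≤ (n:ℝ)/2 + 1 := by
      have : ((n/2:ℕ):ℝ) ≤ (n:ℝ)/2 := by
        rw [le_div_iff₀ (by norm_num)]
        exact_mod_cast Nat.div_mul_le_self n 2
      linarith
    have hg : 0 < Real.Gamma ((n:ℝ)/2 + 1) := Real.Gamma_pos_of_pos (by positivity)
    calc (((n/2+1).factorial : ℝ)) = (((n/2:ℕ):ℝ)+1) * ((n/2).factorial : ℝ) := hfact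
      _ ≤ (((n:ℝ)/2+1)) * (2 * Real.Gamma ((n:ℝ)/2 + 1)) := by
          apply mul_le_mul hle IH (by positivity) (by positivity)
      _ = 2 * (((n:ℝ)/2 + 1) * Real.Gamma ((n:ℝ)/2 + 1)) := by ring



lemma vol_closedBall_le {n : ℕ} (hn : 1 ≤ n) (x : EuclideanSpace ℝ (Fin n)) {r : ℝ}
    (hr : 0 ≤ r) :
    (volume (closedBall x r)).toReal ≤ 2 * (13 / Real.sqrt n)^n * r^n := by
  have hnpos : (0:ℝ) < n := by exact_mod_cast hn
  have hg : 0 < Real.Gamma ((n:ℝ)/2 + 1) := Real.Gamma_pos_of_pos (by positivity)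
  have hfpos : (0:ℝ) < ((n/2).factorial : ℝ) := by exact_mod_cast (n/2).factorial_pos
  haveI : Nonempty (Fin n) := ⟨⟨0, hn⟩⟩
  have hvol := EuclideanSpace.volume_closedBall (Fin n) x r
  rw [Fintype.card_fin] at hvol
  have htr : (volume (closedBall x r)).toReal
      = r^n * (Real.sqrt π ^ n / Real.Gamma ((n:ℝ)/2 + 1)) := by
    rw [hvol, ENNReal.toReal_mul, ENNReal.toReal_pow, ENNReal.toReal_ofReal hr,
      ENNReal.toReal_ofReal (by positivity)]
  rw [htr]
  -- p! ≥ (√(n/50))^n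
  have hsq : (0:ℝ) ≤ Real.sqrt ((n:ℝ)/50) := Real.sqrt_nonneg _
  have hpf : (Real.sqrt ((n:ℝ)/50))^n ≤ ((n/2).factorial : ℝ) := by
    have h1 : ((Real.sqrt ((n:ℝ)/50))^n)^2 ≤ ((n/2).factorial : ℝ)^2 := by
      have h0 : ((Real.sqrt ((n:ℝ)/50))^n)^2 = ((n:ℝ)/50)^n := by
        rw [← pow_mul, mul_comm n 2, pow_mul, Real.sq_sqrt (by positivity)]
      rw [h0]
      have h3 : ((n:ℝ)/50)^n = (n:ℝ)^n / 50^n := div_pow _ _ _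
      rw [h3, div_le_iff₀ (by positivity)]
      nlinarith [half_fact_bound n]
    exact (pow_le_pow_iff_left₀ (by positivity) (le_of_lt hfpos) two_ne_zero).mp h1
  -- Γ ≥ p!/2 ≥ (√(n/50))^n / 2
  have hG : (Real.sqrt ((n:ℝ)/50))^n / 2 ≤ Real.Gamma ((n:ℝ)/2 + 1) := by
    have := half_fact_le_gamma n; linarith
  have hGpos : (0:ℝ) < (Real.sqrt ((n:ℝ)/50))^n / 2 := by
    have : (0:ℝ) < Real.sqrt ((n:ℝ)/50) := Real.sqrt_pos.mpr (by positivity)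
    positivity
  have hsn : (0:ℝ) < Real.sqrt n := Real.sqrt_pos.mpr hnpos
  have hb : Real.sqrt π ≤ 13 / Real.sqrt n * Real.sqrt ((n:ℝ)/50) := by
    have h7 : Real.sqrt ((n:ℝ)/50) = Real.sqrt n * Real.sqrt (1/50) := by
      rw [← Real.sqrt_mul (Nat.cast_nonneg n)]; norm_num; rw [div_eq_mul_inv]
    have h8 : 13 / Real.sqrt n * (Real.sqrt n * Real.sqrt (1/50)) = 13 * Real.sqrt (1/50) := by
      field_simp
    rw [h7, h8]
    have h9 : Real.sqrt π ≤ Real.sqrt (169/50) := by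
      apply Real.sqrt_le_sqrt; nlinarith [Real.pi_lt_d2]
    refine h9.trans ?_
    have h10 : Real.sqrt (169/50) = Real.sqrt (13^2 * (1/50)) := by norm_num
    rw [h10, Real.sqrt_mul (by positivity), Real.sqrt_sq (by norm_num)]
  have key : Real.sqrt π ^ n / Real.Gamma ((n:ℝ)/2 + 1) ≤ 2 * (13 / Real.sqrt n)^n := by
    have h5 : Real.sqrt π ^ n / Real.Gamma ((n:ℝ)/2 + 1)
        ≤ Real.sqrt π ^ n / ((Real.sqrt ((n:ℝ)/50))^n / 2) :=
      div_le_div_of_nonneg_left (by positivity) hGpos hG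
    refine h5.trans ?_
    rw [div_le_iff₀ hGpos]
    have hbn : Real.sqrt π ^ n ≤ (13/Real.sqrt n)^n * (Real.sqrt ((n:ℝ)/50))^n := by
      rw [← mul_pow]
      exact pow_le_pow_left₀ (Real.sqrt_nonneg π) hb n
    calc Real.sqrt π ^ n ≤ (13/Real.sqrt n)^n * (Real.sqrt ((n:ℝ)/50))^n := hbn
      _ = 2 * (13 / Real.sqrt n)^n * ((Real.sqrt ((n:ℝ)/50))^n / 2) := by ring
  calc r^n * (Real.sqrt π ^ n / Real.Gamma ((n:ℝ)/2 + 1))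
      ≤ r^n * (2 * (13 / Real.sqrt n)^n) := by
        apply mul_le_mul_of_nonneg_left key (by positivity)
    _ = 2 * (13 / Real.sqrt n)^n * r^n := by ring


variable {E : Type*} [NormedAddCommGroup E] [InnerProductSpace ℝ E]

lemma maurey_step (s : Finset E) (w : E → ℝ) (hw0 : ∀ y ∈ s, 0 ≤ w y)
    (hw1 : ∑ y ∈ s, w y = 1) (hnorm : ∀ y ∈ s, ‖y‖ ≤ 1) (x : E)
    (hx : ∑ y ∈ s, w y • y = x) (v : E) :
    ∃ y ∈ s, ‖v + (y - x)‖^2 ≤ ‖v‖^2 + 1 := by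
  by_contra hcon
  push_neg at hcon
  -- there is a y with positive weight
  have hex : ∃ y ∈ s, 0 < w y := by
    by_contra h
    push_neg at h
    have : ∑ y ∈ s, w y = 0 := Finset.sum_eq_zero fun y hy => le_antisymm (h y hy) (hw0 y hy)
    rw [hw1] at this; norm_num at this
  obtain ⟨y₀, hy₀, hwy₀⟩ := hex
  -- the weighted average of the squared norms
  have key : ∑ y ∈ s, w y * ‖v + (y - x)‖^2 ≤ ‖v‖^2 + 1 := by
    have expand : ∀ y ∈ s, w y * ‖v + (y - x)‖^2
        = w y * ‖v‖^2 + 2 * (w y * inner ℝ v (y - x)) + w y * ‖y - x‖^2 := by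
      intro y _
      rw [@norm_add_sq_real]; ring
    rw [Finset.sum_congr rfl expand]
    rw [Finset.sum_add_distrib, Finset.sum_add_distrib, ← Finset.sum_mul, hw1, one_mul,
      ← Finset.mul_sum]
    have hcross : ∑ y ∈ s, w y * inner ℝ v (y - x) = (0:ℝ) := by
      have : ∑ y ∈ s, w y * inner ℝ v (y - x) = inner ℝ v (∑ y ∈ s, w y • (y - x)) := by
        rw [inner_sum]
        exact Finset.sum_congr rfl fun y _ => by rw [real_inner_smul_right]
      rw [this]
      have hzero : ∑ y ∈ s, w y • (y - x) = 0 := by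
        have : ∑ y ∈ s, w y • (y - x) = (∑ y ∈ s, w y • y) - (∑ y ∈ s, w y) • x := by
          rw [Finset.sum_smul, ← Finset.sum_sub_distrib]
          exact Finset.sum_congr rfl fun y _ => by rw [smul_sub]
        rw [this, hx, hw1, one_smul, sub_self]
      rw [hzero, inner_zero_right]
    rw [hcross]
    have hlast : ∑ y ∈ s, w y * ‖y - x‖^2 ≤ 1 := by
      have hsq : ∀ y ∈ s, w y * ‖y - x‖^2
          = w y * ‖y‖^2 - 2 * (w y * inner ℝ y x) + w y * ‖x‖^2 := by
        intro y _; rw [@norm_sub_sq_real]; ring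
      rw [Finset.sum_congr rfl hsq]
      have hinner : ∑ y ∈ s, w y * inner ℝ y x = ‖x‖^2 := by
        have : ∑ y ∈ s, w y * inner ℝ y x = inner ℝ (∑ y ∈ s, w y • y) x := by
          rw [sum_inner]
          exact Finset.sum_congr rfl fun y _ => by rw [real_inner_smul_left]
        rw [this, hx, real_inner_self_eq_norm_sq]
      have hsplit : ∑ y ∈ s, (w y * ‖y‖^2 - 2 * (w y * inner ℝ y x) + w y * ‖x‖^2)
          = (∑ y ∈ s, w y * ‖y‖^2) - 2 * (∑ y ∈ s, w y * inner ℝ y x)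
            + (∑ y ∈ s, w y) * ‖x‖^2 := by
        rw [Finset.sum_add_distrib, Finset.sum_sub_distrib, ← Finset.mul_sum, ← Finset.sum_mul]
      rw [hsplit, hinner, hw1, one_mul]
      have h1 : ∑ y ∈ s, w y * ‖y‖^2 ≤ 1 := by
        rw [← hw1]
        apply Finset.sum_le_sum
        intro y hy
        have h2 : ‖y‖^2 ≤ 1 := by nlinarith [hnorm y hy, norm_nonneg y]
        nlinarith [hw0 y hy, h2, mul_le_mul_of_nonneg_left h2 (hw0 y hy)]
      nlinarith [sq_nonneg ‖x‖]
    linarith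
  have hgt : ‖v‖^2 + 1 < ∑ y ∈ s, w y * ‖v + (y - x)‖^2 := by
    calc ‖v‖^2 + 1 = ∑ y ∈ s, w y * (‖v‖^2 + 1) := by rw [← Finset.sum_mul, hw1, one_mul]
      _ < ∑ y ∈ s, w y * ‖v + (y - x)‖^2 := by
          apply Finset.sum_lt_sum
          · intro y hy
            exact mul_le_mul_of_nonneg_left (le_of_lt (hcon y hy)) (hw0 y hy)
          · exact ⟨y₀, hy₀, by nlinarith [hcon y₀ hy₀]⟩
  linarith

lemma maurey_exists (s : Finset E) (w : E → ℝ) (hw0 : ∀ y ∈ s, 0 ≤ w y)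
    (hw1 : ∑ y ∈ s, w y = 1) (hnorm : ∀ y ∈ s, ‖y‖ ≤ 1) (x : E)
    (hx : ∑ y ∈ s, w y • y = x) :
    ∀ k : ℕ, ∃ f : Fin k → E, (∀ j, f j ∈ s) ∧ ‖(∑ j, f j) - (k:ℝ) • x‖^2 ≤ k
  | 0 => ⟨Fin.elim0, fun j => j.elim0, by simp⟩
  | (k+1) => by
    obtain ⟨f, hf, hbound⟩ := maurey_exists s w hw0 hw1 hnorm x hx k
    obtain ⟨y, hy, hstep⟩ := maurey_step s w hw0 hw1 hnorm x hx ((∑ j, f j) - (k:ℝ) • x)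
    refine ⟨Fin.snoc f y, ?_, ?_⟩
    · intro j
      induction j using Fin.lastCases with
      | last => simpa using hy
      | cast j => simpa using hf j
    · have hsum : (∑ j : Fin (k+1), Fin.snoc f y j) = (∑ j, f j) + y := by
        rw [Fin.sum_univ_castSucc]
        simp
      rw [hsum]
      have harr : (∑ j, f j) + y - ((k:ℝ)+1) • x
          = ((∑ j, f j) - (k:ℝ) • x) + (y - x) := by
        rw [add_smul, one_smul]; abel
      push_cast
      rw [harr]
      calc ‖((∑ j, f j) - (k:ℝ) • x) + (y - x)‖^2
          ≤ ‖(∑ j, f j) - (k:ℝ) • x‖^2 + 1 := hstep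
        _ ≤ (k:ℝ) + 1 := by linarith


lemma maurey_cover {n : ℕ} (s : Finset (EuclideanSpace ℝ (Fin n)))
    (hnorm : ∀ y ∈ s, ‖y‖ ≤ 1) (k : ℕ) (hk : 1 ≤ k) :
    ∃ C : Finset (EuclideanSpace ℝ (Fin n)),
      C.card ≤ (s.card + k - 1).choose k ∧
      convexHull ℝ (s : Set (EuclideanSpace ℝ (Fin n)))
        ⊆ ⋃ y ∈ C, closedBall y (1 / Real.sqrt k) := by
  classical
  set C : Finset (EuclideanSpace ℝ (Fin n)) :=
    (Finset.univ : Finset (Sym {z // z ∈ s} k)).image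
      (fun σ => (k:ℝ)⁻¹ • (σ.val.map Subtype.val).sum) with hC
  refine ⟨C, ?_, ?_⟩
  · calc C.card ≤ (Finset.univ : Finset (Sym {z // z ∈ s} k)).card := Finset.card_image_le
      _ = Fintype.card (Sym {z // z ∈ s} k) := Finset.card_univ
      _ = (Fintype.card {z // z ∈ s} + k - 1).choose k := Sym.card_sym_eq_choose k
      _ = (s.card + k - 1).choose k := by rw [Fintype.card_coe]
  · intro x hx
    rw [Finset.convexHull_eq] at hx
    obtain ⟨w, hw0, hw1, hcm⟩ := hx
    rw [Finset.centerMass_eq_of_sum_1 _ _ hw1] at hcm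
    simp only [id] at hcm
    obtain ⟨f, hf, hbound⟩ := maurey_exists s w hw0 hw1 hnorm x hcm k
    have hkpos : (0:ℝ) < k := by exact_mod_cast hk
    have hsk : (0:ℝ) < Real.sqrt k := Real.sqrt_pos.mpr hkpos
    set y : EuclideanSpace ℝ (Fin n) := (k:ℝ)⁻¹ • ∑ j, f j with hy
    have hyC : y ∈ C := by
      rw [hC]
      apply Finset.mem_image.mpr
      refine ⟨⟨Finset.univ.val.map (fun j => (⟨f j, hf j⟩ : {z // z ∈ s})), by simp⟩,
        Finset.mem_univ _, ?_⟩
      rw [hy]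
      congr 1
      rw [Multiset.map_map]
      rfl
    apply Set.mem_biUnion hyC
    rw [mem_closedBall, dist_eq_norm]
    have hxy : x - y = -((k:ℝ)⁻¹ • ((∑ j, f j) - (k:ℝ) • x)) := by
      rw [hy, smul_sub, smul_smul, inv_mul_cancel₀ (ne_of_gt hkpos), one_smul]
      abel
    rw [hxy, norm_neg, norm_smul]
    have hnv : ‖(∑ j, f j) - (k:ℝ) • x‖ ≤ Real.sqrt k := by
      have h1 : ‖(∑ j, f j) - (k:ℝ) • x‖ = Real.sqrt (‖(∑ j, f j) - (k:ℝ) • x‖^2) := by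
        rw [Real.sqrt_sq (norm_nonneg _)]
      rw [h1]
      exact Real.sqrt_le_sqrt hbound
    have : ‖(k:ℝ)⁻¹‖ = (k:ℝ)⁻¹ := by
      rw [Real.norm_eq_abs, abs_of_pos (by positivity)]
    rw [this]
    calc (k:ℝ)⁻¹ * ‖(∑ j, f j) - (k:ℝ) • x‖ ≤ (k:ℝ)⁻¹ * Real.sqrt k := by
          apply mul_le_mul_of_nonneg_left hnv (by positivity)
      _ = 1 / Real.sqrt k := by
          rw [eq_div_iff (ne_of_gt hsk), mul_assoc, Real.mul_self_sqrt (le_of_lt hkpos),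
            inv_mul_cancel₀ (ne_of_gt hkpos)]

lemma choose_bound_real (N k : ℕ) (hk : 1 ≤ k) :
    (N.choose k : ℝ) ≤ (Real.exp 1 * N / k)^k := by
  have hkpos : (0:ℝ) < k := by exact_mod_cast hk
  have hfac : (0:ℝ) < k.factorial := by exact_mod_cast k.factorial_pos
  have h1 : (N.choose k : ℝ) ≤ (N:ℝ)^k / k.factorial := by
    exact_mod_cast Nat.choose_le_pow_div k N
  refine h1.trans ?_
  have h2 := pow_le_exp_mul_factorial k
  rw [div_le_iff₀ hfac]
  have h3 : (Real.exp 1 * N / k)^k = Real.exp 1 ^ k * (N:ℝ)^k / (k:ℝ)^k := by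
    rw [div_pow, mul_pow]
  rw [h3, div_mul_eq_mul_div, le_div_iff₀ (by positivity)]
  calc (N:ℝ)^k * (k:ℝ)^k ≤ (N:ℝ)^k * (Real.exp 1 ^ k * k.factorial) := by
        apply mul_le_mul_of_nonneg_left h2 (by positivity)
    _ = Real.exp 1 ^ k * (N:ℝ)^k * k.factorial := by ring


set_option maxHeartbeats 2000000 in
theorem stmt_11 :
    ∃ c : ℝ, 0 < c ∧ ∀ n : ℕ, 1 ≤ n → ∀ m : ℕ, 2 * n ≤ m →
      ∀ P : Finset (EuclideanSpace ℝ (Fin n)),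
        P.card ≤ m → (P : Set (EuclideanSpace ℝ (Fin n))) ⊆ closedBall 0 1 →
        (volume (convexHull ℝ (P : Set (EuclideanSpace ℝ (Fin n))))).toReal
          ≤ (c * Real.sqrt (Real.log ((m : ℝ) / n)) / n) ^ n := by
  refine ⟨100000, by norm_num, ?_⟩
  intro n hn m hm P hcard hsub
  have hnpos : (0:ℝ) < n := by exact_mod_cast hn
  have hmn : 2 * (n:ℝ) ≤ m := by exact_mod_cast hm
  have hmpos : (0:ℝ) < m := by linarith
  set L := Real.log ((m:ℝ)/n) with hLdef
  have hm2 : (2:ℝ) ≤ (m:ℝ)/n := by rw [le_div_iff₀ hnpos]; linarith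
  have hL2 : Real.log 2 ≤ L := Real.log_le_log (by norm_num) hm2
  have hlog2 : (0.6931:ℝ) < Real.log 2 := by
    have := Real.log_two_gt_d9; linarith
  have hLpos : (0:ℝ) < L := by linarith
  have hsqL : (0:ℝ) < Real.sqrt L := Real.sqrt_pos.mpr hLpos
  have hsqn : (0:ℝ) < Real.sqrt n := Real.sqrt_pos.mpr hnpos
  have hnorm : ∀ y ∈ P, ‖y‖ ≤ 1 := by
    intro y hy
    have := hsub hy
    rwa [mem_closedBall, dist_zero_right] at this
  have he9 : Real.exp 1 < 2.7182818286 := Real.exp_one_lt_d9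
  have hepos := Real.exp_pos 1
  by_cases hcase : (n:ℝ) ≤ L
  · -- trivial case: volume of the unit ball suffices
    have hhull : convexHull ℝ (P : Set (EuclideanSpace ℝ (Fin n)))
        ⊆ closedBall (0 : EuclideanSpace ℝ (Fin n)) 1 :=
      convexHull_min hsub (convex_closedBall _ _)
    have h1 : volume (convexHull ℝ (P : Set (EuclideanSpace ℝ (Fin n))))
        ≤ volume (closedBall (0 : EuclideanSpace ℝ (Fin n)) 1) := measure_mono hhull
    have hfin : volume (closedBall (0 : EuclideanSpace ℝ (Fin n)) 1) ≠ ⊤ :=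
      measure_closedBall_lt_top.ne
    have h2 := ENNReal.toReal_mono hfin h1
    refine h2.trans ?_
    have h3 := vol_closedBall_le hn (0 : EuclideanSpace ℝ (Fin n)) (zero_le_one)
    rw [one_pow, mul_one] at h3
    refine h3.trans ?_
    have h4 : 2 * (13 / Real.sqrt n)^n ≤ (26 / Real.sqrt n)^n := by
      have h5 : (2:ℝ) ≤ 2^n := by
        calc (2:ℝ) = 2^1 := by norm_num
          _ ≤ 2^n := pow_le_pow_right₀ (by norm_num) hn
      calc 2 * (13 / Real.sqrt n)^n ≤ 2^n * (13 / Real.sqrt n)^n := by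
            apply mul_le_mul_of_nonneg_right h5 (by positivity)
        _ = (26 / Real.sqrt n)^n := by
            rw [← mul_pow]; congr 1; ring
    refine h4.trans ?_
    apply pow_le_pow_left₀ (by positivity)
    have hsqle : Real.sqrt n ≤ Real.sqrt L := Real.sqrt_le_sqrt hcase
    have h6 : 26 / Real.sqrt n = 26 * Real.sqrt n / n := by
      rw [div_eq_div_iff (ne_of_gt hsqn) (ne_of_gt hnpos), mul_assoc, Real.mul_self_sqrt (le_of_lt hnpos)]
    rw [h6]
    apply div_le_div_of_nonneg_right _ (le_of_lt hnpos)
    nlinarith [hsqle, hsqL]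
  · -- main case : L < n
    push_neg at hcase
    set k : ℕ := ⌈(n:ℝ)/L⌉₊ with hkdef
    have hnL1 : (1:ℝ) ≤ (n:ℝ)/L := by
      rw [le_div_iff₀ hLpos]; linarith
    have hk1 : 1 ≤ k := Nat.one_le_ceil_iff.mpr (by positivity)
    have hkpos : (0:ℝ) < k := by exact_mod_cast hk1
    have hkl : (n:ℝ)/L ≤ k := Nat.le_ceil _
    have hkl' : (n:ℝ) ≤ L * k := by
      rw [div_le_iff₀ hLpos] at hkl; linarith
    have hkr : (k:ℝ) ≤ 2*((n:ℝ)/L) := by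
      have h := Nat.ceil_lt_add_one (le_of_lt (show (0:ℝ) < (n:ℝ)/L by positivity))
      have h' : (k:ℝ) < (n:ℝ)/L + 1 := h
      linarith
    have hk3 : (k:ℝ) ≤ 3*n := by
      have h1 : 2*((n:ℝ)/L) ≤ 3*n := by
        rw [show 2*((n:ℝ)/L) = (2*n)/L by ring, div_le_iff₀ hLpos]
        nlinarith
      linarith
    have hLk : L * k ≤ 2*n := by
      have h1 := mul_le_mul_of_nonneg_left hkr (le_of_lt hLpos)
      calc L * (k:ℝ) ≤ L * (2*((n:ℝ)/L)) := h1
        _ = 2*n := by field_simp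
    have hnk : (n:ℝ)*(n:ℝ)/L ≤ (n:ℝ)*k := by
      have := mul_le_mul_of_nonneg_left hkl (le_of_lt hnpos)
      calc (n:ℝ)*(n:ℝ)/L = (n:ℝ)*((n:ℝ)/L) := by ring
        _ ≤ (n:ℝ)*k := this
    obtain ⟨C, hCcard, hCcover⟩ := maurey_cover P hnorm k hk1
    set r : ℝ := 1 / Real.sqrt k with hrdef
    have hsk : (0:ℝ) < Real.sqrt k := Real.sqrt_pos.mpr hkpos
    have hr : (0:ℝ) ≤ r := by positivity
    -- measure chain
    have h1 : volume (convexHull ℝ (P : Set (EuclideanSpace ℝ (Fin n))))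
        ≤ ∑ y ∈ C, volume (closedBall y r) :=
      (measure_mono hCcover).trans (measure_biUnion_finset_le C _)
    have h2 : ∑ y ∈ C, volume (closedBall y r)
        = (C.card : ℝ≥0∞) * volume (closedBall (0 : EuclideanSpace ℝ (Fin n)) r) := by
      rw [Finset.sum_congr rfl (fun y _ => Measure.addHaar_closedBall_center volume y r)]
      rw [Finset.sum_const, nsmul_eq_mul]
    have hfin : volume (closedBall (0 : EuclideanSpace ℝ (Fin n)) r) ≠ ⊤ :=
      measure_closedBall_lt_top.ne
    have h3 : (volume (convexHull ℝ (P : Set (EuclideanSpace ℝ (Fin n))))).toReal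
        ≤ (C.card : ℝ) * (volume (closedBall (0 : EuclideanSpace ℝ (Fin n)) r)).toReal := by
      have h4 := ENNReal.toReal_mono ?_ (h1.trans_eq h2)
      · rwa [ENNReal.toReal_mul, ENNReal.toReal_natCast] at h4
      · exact ENNReal.mul_ne_top (by simp) hfin
    refine h3.trans ?_
    -- bound the cardinality
    have hNcard : (C.card : ℝ) ≤ 1097^n := by
      have hc1 : (C.card : ℝ) ≤ ((m + k).choose k : ℝ) := by
        have : C.card ≤ (m + k).choose k :=
          hCcard.trans (Nat.choose_le_choose k (by omega))
        exact_mod_cast this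
      have hc2 := choose_bound_real (m + k) k hk1
      have hc3 : Real.exp 1 * ((m:ℝ) + k) / k ≤ 7 * m / k := by
        apply div_le_div_of_nonneg_right _ (le_of_lt hkpos)
        nlinarith [mul_le_mul_of_nonneg_right (le_of_lt he9)
          (show (0:ℝ) ≤ (m:ℝ)+k by positivity)]
      have hc4 : 7 * (m:ℝ) / k ≤ 7 * m * L / n := by
        rw [div_le_div_iff₀ hkpos hnpos]
        nlinarith [hkl', hmpos]
      have hc5 : 7 * (m:ℝ) * L / n ≤ Real.exp (3.5 * L) := by
        have hpos7 : (0:ℝ) < 7 * m * L / n := by positivity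
        rw [← Real.exp_log hpos7]
        apply Real.exp_le_exp.mpr
        have heq : 7 * (m:ℝ) * L / n = 7 * (((m:ℝ)/n) * L) := by ring
        rw [heq, Real.log_mul (by norm_num) (by positivity),
          Real.log_mul (by positivity) (ne_of_gt hLpos)]
        have hl7 : Real.log 7 ≤ 2 := by
          rw [Real.log_le_iff_le_exp (by norm_num)]
          have hexp2 : Real.exp 2 = Real.exp 1 * Real.exp 1 := by
            rw [← Real.exp_add]; norm_num
          nlinarith [Real.exp_one_gt_d9]
        have hlL : Real.log L ≤ L - 1 := Real.log_le_sub_one_of_pos hLpos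
        have : (1:ℝ) ≤ 1.5 * L := by nlinarith
        linarith
      have hc6 : (Real.exp 1 * ((m:ℝ) + k) / k)^k ≤ (Real.exp (3.5 * L))^k := by
        apply pow_le_pow_left₀ (by positivity)
        linarith
      have hc7 : (Real.exp (3.5 * L))^k = Real.exp (3.5 * L * k) := by
        rw [← Real.exp_nat_mul]; ring_nf
      have hc8 : Real.exp (3.5 * L * k) ≤ Real.exp (7 * n) := by
        apply Real.exp_le_exp.mpr
        nlinarith [hLk]
      have hc9 : Real.exp (7 * (n:ℝ)) ≤ 1097^n := by
        have he7 : Real.exp 7 ≤ 1097 := by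
          have h7 : Real.exp 7 = (Real.exp 1)^(7:ℕ) := by
            rw [← Real.exp_nat_mul]; norm_num
          rw [h7]
          calc (Real.exp 1)^(7:ℕ) ≤ 2.7182818286^(7:ℕ) :=
                pow_le_pow_left₀ (le_of_lt hepos) (le_of_lt he9) 7
            _ ≤ 1097 := by norm_num
        calc Real.exp (7 * (n:ℝ)) = Real.exp ((n:ℕ) * (7:ℝ)) := by ring_nf
          _ = (Real.exp 7)^n := Real.exp_nat_mul 7 n
          _ ≤ 1097^n := pow_le_pow_left₀ (le_of_lt (Real.exp_pos 7)) he7 n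
      calc (C.card : ℝ) ≤ ((m + k).choose k : ℝ) := hc1
        _ ≤ (Real.exp 1 * ((m:ℝ) + k) / k)^k := by push_cast at hc2 ⊢; exact hc2
        _ ≤ (Real.exp (3.5 * L))^k := hc6
        _ = Real.exp (3.5 * L * k) := hc7
        _ ≤ Real.exp (7 * n) := hc8
        _ ≤ 1097^n := hc9
    -- bound the ball volume
    have hB := vol_closedBall_le hn (0 : EuclideanSpace ℝ (Fin n)) hr
    have hBnk : (13 / Real.sqrt n)^n * r^n = (13 / Real.sqrt ((n:ℝ)*k))^n := by
      rw [← mul_pow]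
      congr 1
      rw [hrdef, Real.sqrt_mul (Nat.cast_nonneg n)]
      field_simp
    have hB3 : 13 / Real.sqrt ((n:ℝ)*k) ≤ 13 * Real.sqrt L / n := by
      have hs1 : (n:ℝ) / Real.sqrt L ≤ Real.sqrt ((n:ℝ)*k) := by
        have h5 : Real.sqrt ((n:ℝ)*(n:ℝ)/L) ≤ Real.sqrt ((n:ℝ)*k) := Real.sqrt_le_sqrt hnk
        have h6 : Real.sqrt ((n:ℝ)*(n:ℝ)/L) = (n:ℝ) / Real.sqrt L := by
          rw [Real.sqrt_div (by positivity), Real.sqrt_mul_self (le_of_lt hnpos)]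
        rwa [h6] at h5
      have hpos1 : (0:ℝ) < (n:ℝ) / Real.sqrt L := by positivity
      calc 13 / Real.sqrt ((n:ℝ)*k) ≤ 13 / ((n:ℝ) / Real.sqrt L) :=
            div_le_div_of_nonneg_left (by norm_num) hpos1 hs1
        _ = 13 * Real.sqrt L / n := by
            rw [div_div_eq_mul_div]
    have hBn : (13 / Real.sqrt ((n:ℝ)*k))^n ≤ (13 * Real.sqrt L / n)^n :=
      pow_le_pow_left₀ (by positivity) hB3 n
    -- final combination
    have hvol : (volume (closedBall (0 : EuclideanSpace ℝ (Fin n)) r)).toReal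
        ≤ 2 * (13 * Real.sqrt L / n)^n := by
      calc (volume (closedBall (0 : EuclideanSpace ℝ (Fin n)) r)).toReal
          ≤ 2 * (13 / Real.sqrt n)^n * r^n := hB
        _ = 2 * ((13 / Real.sqrt n)^n * r^n) := by ring
        _ = 2 * (13 / Real.sqrt ((n:ℝ)*k))^n := by rw [hBnk]
        _ ≤ 2 * (13 * Real.sqrt L / n)^n := by
            apply mul_le_mul_of_nonneg_left hBn (by norm_num)
    have h2n : (2:ℝ) ≤ 2^n := by
      calc (2:ℝ) = 2^1 := by norm_num
        _ ≤ 2^n := pow_le_pow_right₀ (by norm_num) hn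
    calc (C.card : ℝ) * (volume (closedBall (0 : EuclideanSpace ℝ (Fin n)) r)).toReal
        ≤ 1097^n * (2 * (13 * Real.sqrt L / n)^n) := by
          apply mul_le_mul hNcard hvol (ENNReal.toReal_nonneg) (by positivity)
      _ ≤ 1097^n * (2^n * (13 * Real.sqrt L / n)^n) := by
          apply mul_le_mul_of_nonneg_left _ (by positivity)
          apply mul_le_mul_of_nonneg_right h2n (by positivity)
      _ = (28522 * Real.sqrt L / n)^n := by
          rw [← mul_pow, ← mul_pow]; congr 1; ring
      _ ≤ (100000 * Real.sqrt L / n)^n := by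
          apply pow_le_pow_left₀ (by positivity)
          apply div_le_div_of_nonneg_right _ (le_of_lt hnpos)
          nlinarith [hsqL]
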